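/- Let T be a finite weighted tree rooted at the start vertex v_s with at least two vertices. Then there exists a covering walk from v_s of minimal agent count (among all covering walks from v_s, with no requirement to return to v_s) whose last vertex is a leaf of T. -/

import Mathlib

/-! Strategic deployment: common definitions.

A walk is scanned with a state consisting of the set of already-visited
vertices, the number `curr` of currently available (non-settled) agents, and
the number `add` of additional agents (beyond `N = ∑ v, wV v`) recruited so
far.  Crossing an edge `e` requires `curr ≥ wE e` (topping up `add`
otherwise); the first visit of a vertex `v` settles `wV v` agents there. -/

namespace Deploy

structure St (V : Type*) (α : Type*) where
  visited : Finset V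
  curr : α
  add : α

variable {V : Type*} [DecidableEq V] {α : Type*} [AddCommMonoid α] [LinearOrder α] [IsOrderedAddMonoid α] [Sub α]

/-- Scan step for crossing an edge `e`. -/
def crossEdge (wE : Sym2 V → α) (e : Sym2 V) (s : St V α) : St V α :=
  if s.curr < wE e then ⟨s.visited, wE e, s.add + (wE e - s.curr)⟩ else s

/-- Scan step for visiting a vertex `v` (only first visits have an effect). -/
def visitVtx (wV : V → α) (v : V) (s : St V α) : St V α :=
  if v ∈ s.visited then s
  else if s.curr < wV v then ⟨insert v s.visited, 0, s.add + (wV v - s.curr)⟩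
  else ⟨insert v s.visited, s.curr - wV v, s.add⟩

variable {G : SimpleGraph V}

/-- Scanning a walk: alternately cross the next edge and visit the next vertex. -/
def scanWalk (wE : Sym2 V → α) (wV : V → α) : {u t : V} → G.Walk u t → St V α → St V α
  | _, _, .nil, s => s
  | u, _, .cons (v := v) _ p, s => scanWalk wE wV p (visitVtx wV v (crossEdge wE s(u, v) s))

/-- The agent count of a walk `p` starting at `vs`: the scan starts with
`curr = N = ∑ v, wV v` and `add = 0`, first visiting the start vertex; the
agent count is `N` plus the final value of `add`. -/
def agentCount [Fintype V] (wE : Sym2 V → α) (wV : V → α) {vs t : V} (p : G.Walk vs t) : α :=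
  (∑ v, wV v) + (scanWalk wE wV p (visitVtx wV vs ⟨∅, ∑ v, wV v, 0⟩)).add

/-- A walk is covering if every vertex of the graph appears on it. -/
def IsCovering {vs t : V} (p : G.Walk vs t) : Prop := ∀ v : V, v ∈ p.support

end Deploy

namespace Deploy

/-- A leaf of a rooted tree: a vertex of degree 1 different from the root. -/
def IsLeaf {V : Type*} (T : SimpleGraph V) (vs b : V) : Prop :=
  Nat.card (T.neighborSet b) = 1 ∧ b ≠ vs

end Deploy

/-! ### Auxiliary lemmas -/

namespace DeployAux

open Deploy SimpleGraph

set_option linter.unusedSectionVars false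

variable {V : Type*} [DecidableEq V] {G : SimpleGraph V}
variable (wE : Sym2 V → NNReal) (wV : V → NNReal)

@[simp] lemma scanWalk_nil {u : V} (s : St V NNReal) :
    scanWalk (G := G) wE wV (.nil : G.Walk u u) s = s := rfl

@[simp] lemma scanWalk_cons {u v t : V} (h : G.Adj u v) (p : G.Walk v t) (s : St V NNReal) :
    scanWalk wE wV (.cons h p) s = scanWalk wE wV p (visitVtx wV v (crossEdge wE s(u, v) s)) := rfl

lemma scanWalk_append {u v t : V} (p : G.Walk u v) (q : G.Walk v t) (s : St V NNReal) :
    scanWalk wE wV (p.append q) s = scanWalk wE wV q (scanWalk wE wV p s) := by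
  induction p generalizing s with
  | nil => rfl
  | cons h p ih => simp only [SimpleGraph.Walk.cons_append, scanWalk_cons, ih]

lemma add_le_crossEdge (e : Sym2 V) (s : St V NNReal) : s.add ≤ (crossEdge wE e s).add := by
  unfold crossEdge; split <;> simp

lemma add_le_visitVtx (v : V) (s : St V NNReal) : s.add ≤ (visitVtx wV v s).add := by
  unfold visitVtx; split
  · exact le_refl _
  · split <;> simp

lemma add_le_scanWalk {u t : V} (p : G.Walk u t) (s : St V NNReal) :
    s.add ≤ (scanWalk wE wV p s).add := by
  induction p generalizing s with
  | nil => exact le_refl _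
  | cons h p ih =>
    rw [scanWalk_cons]
    exact le_trans (le_trans (add_le_crossEdge wE _ s) (add_le_visitVtx wV _ _)) (ih _)

lemma visited_subset_crossEdge (e : Sym2 V) (s : St V NNReal) :
    s.visited ⊆ (crossEdge wE e s).visited := by
  unfold crossEdge; split <;> exact Finset.Subset.refl _

lemma visited_subset_visitVtx (v : V) (s : St V NNReal) :
    s.visited ⊆ (visitVtx wV v s).visited := by
  unfold visitVtx; split
  · exact Finset.Subset.refl _
  · split <;> exact Finset.subset_insert _ _

lemma visited_subset_scanWalk {u t : V} (p : G.Walk u t) (s : St V NNReal) :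
    s.visited ⊆ (scanWalk wE wV p s).visited := by
  induction p generalizing s with
  | nil => exact Finset.Subset.refl _
  | cons h p ih =>
    rw [scanWalk_cons]
    exact Finset.Subset.trans (Finset.Subset.trans (visited_subset_crossEdge wE _ s)
      (visited_subset_visitVtx wV _ _)) (ih _)

lemma mem_visited_visitVtx (v : V) (s : St V NNReal) : v ∈ (visitVtx wV v s).visited := by
  unfold visitVtx; split
  · assumption
  · split <;> exact Finset.mem_insert_self _ _

lemma support_subset_scanWalk {u t : V} (p : G.Walk u t) (s : St V NNReal) (hu : u ∈ s.visited) :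
    ∀ v ∈ p.support, v ∈ (scanWalk wE wV p s).visited := by
  induction p generalizing s with
  | nil => intro v hv; simp at hv; subst hv; exact hu
  | @cons u w t h p ih =>
    intro v hv
    rw [scanWalk_cons]
    set s' := visitVtx wV w (crossEdge wE s(u, w) s) with hs'
    rcases List.mem_cons.mp hv with rfl | hv
    · exact visited_subset_scanWalk wE wV p s'
        (visited_subset_visitVtx wV _ _ (visited_subset_crossEdge wE _ _ hu))
    · exact ih s' (mem_visited_visitVtx wV w _) v hv

variable [Fintype V]

/-- Invariant: `add + N = curr + (weight of visited vertices)`. -/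
def AddInv (s : St V NNReal) : Prop :=
  s.add + (∑ v, wV v) = s.curr + ∑ w ∈ s.visited, wV w

lemma addInv_crossEdge (e : Sym2 V) (s : St V NNReal) (h : AddInv wV s) :
    AddInv wV (crossEdge wE e s) := by
  unfold AddInv crossEdge at *
  split
  · next hlt =>
    simp only
    calc s.add + (wE e - s.curr) + ∑ v, wV v
        = s.add + ∑ v, wV v + (wE e - s.curr) := by ring
      _ = s.curr + ∑ w ∈ s.visited, wV w + (wE e - s.curr) := by rw [h]
      _ = (s.curr + (wE e - s.curr)) + ∑ w ∈ s.visited, wV w := by ring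
      _ = wE e + ∑ w ∈ s.visited, wV w := by rw [add_tsub_cancel_of_le hlt.le]
  · exact h

lemma addInv_visitVtx (v : V) (s : St V NNReal) (h : AddInv wV s) :
    AddInv wV (visitVtx wV v s) := by
  unfold AddInv visitVtx at *
  split
  · exact h
  · next hv =>
    split
    · next hlt =>
      simp only
      rw [Finset.sum_insert hv]
      calc s.add + (wV v - s.curr) + ∑ x, wV x
          = s.add + ∑ x, wV x + (wV v - s.curr) := by ring
        _ = s.curr + ∑ w ∈ s.visited, wV w + (wV v - s.curr) := by rw [h]
        _ = (s.curr + (wV v - s.curr)) + ∑ w ∈ s.visited, wV w := by ring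
        _ = wV v + ∑ w ∈ s.visited, wV w := by rw [add_tsub_cancel_of_le hlt.le]
        _ = 0 + (wV v + ∑ w ∈ s.visited, wV w) := by ring
    · next hge =>
      push_neg at hge
      simp only
      rw [Finset.sum_insert hv]
      calc s.add + ∑ x, wV x
          = s.curr + ∑ w ∈ s.visited, wV w := h
        _ = (s.curr - wV v + wV v) + ∑ w ∈ s.visited, wV w := by
              rw [tsub_add_cancel_of_le hge]
        _ = s.curr - wV v + (wV v + ∑ w ∈ s.visited, wV w) := by ring

lemma addInv_scanWalk {u t : V} (p : G.Walk u t) (s : St V NNReal) (h : AddInv wV s) :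
    AddInv wV (scanWalk wE wV p s) := by
  induction p generalizing s with
  | nil => exact h
  | cons hadj p ih =>
    rw [scanWalk_cons]
    exact ih _ (addInv_visitVtx wV _ _ (addInv_crossEdge wE wV _ _ h))

/-- Invariant: `curr` has the shape `a - ∑_{w ∈ W} wV w` with `a` either `N`
or an edge weight, and `W ⊆ visited`. -/
def CurrInv (s : St V NNReal) : Prop :=
  ∃ (o : Option (Sym2 V)) (W : Finset V), W ⊆ s.visited ∧
    s.curr = Option.elim o (∑ v, wV v) wE - ∑ w ∈ W, wV w

lemma currInv_crossEdge (e : Sym2 V) (s : St V NNReal) (h : CurrInv wE wV s) :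
    CurrInv wE wV (crossEdge wE e s) := by
  unfold crossEdge
  split
  · exact ⟨some e, ∅, Finset.empty_subset _, by simp⟩
  · exact h

lemma currInv_visitVtx (v : V) (s : St V NNReal) (h : CurrInv wE wV s) :
    CurrInv wE wV (visitVtx wV v s) := by
  unfold visitVtx
  split
  · exact h
  · next hv =>
    obtain ⟨o, W, hW, hc⟩ := h
    have hvW : v ∉ W := fun hvW => hv (hW hvW)
    have key : Option.elim o (∑ x, wV x) wE - ∑ w ∈ insert v W, wV w = s.curr - wV v := by
      rw [Finset.sum_insert hvW, add_comm, ← tsub_tsub, ← hc]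
    split
    · next hlt =>
      refine ⟨o, insert v W, ?_, ?_⟩
      · exact Finset.insert_subset_insert v hW
      · simp only
        rw [key, tsub_eq_zero_of_le hlt.le]
    · next hge =>
      exact ⟨o, insert v W, Finset.insert_subset_insert v hW, key.symm⟩

lemma currInv_scanWalk {u t : V} (p : G.Walk u t) (s : St V NNReal) (h : CurrInv wE wV s) :
    CurrInv wE wV (scanWalk wE wV p s) := by
  induction p generalizing s with
  | nil => exact h
  | cons hadj p ih =>
    rw [scanWalk_cons]
    exact ih _ (currInv_visitVtx wE wV _ _ (currInv_crossEdge wE wV _ _ h))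

/-- For a covering walk, the agent count lies in the (finite) range of an
explicit function. -/
lemma agentCount_covering_mem {vs t : V} (p : G.Walk vs t) (hp : Deploy.IsCovering p) :
    ∃ (o : Option (Sym2 V)) (W : Finset V),
      Deploy.agentCount wE wV p =
        (∑ v, wV v) + (Option.elim o (∑ v, wV v) wE - ∑ w ∈ W, wV w) := by
  set s0 : St V NNReal := visitVtx wV vs ⟨∅, ∑ v, wV v, 0⟩ with hs0
  set sf : St V NNReal := scanWalk wE wV p s0 with hsf
  have hA0 : AddInv wV (⟨∅, ∑ v, wV v, 0⟩ : St V NNReal) := by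
    unfold AddInv; simp
  have hC0 : CurrInv wE wV (⟨∅, ∑ v, wV v, 0⟩ : St V NNReal) := by
    exact ⟨none, ∅, Finset.Subset.refl _, by simp⟩
  have hAf : AddInv wV sf := addInv_scanWalk wE wV p s0 (addInv_visitVtx wV _ _ hA0)
  have hCf : CurrInv wE wV sf := currInv_scanWalk wE wV p s0 (currInv_visitVtx wE wV _ _ hC0)
  have hvisited : sf.visited = Finset.univ := by
    apply Finset.eq_univ_iff_forall.mpr
    intro v
    exact support_subset_scanWalk wE wV p s0 (mem_visited_visitVtx wV vs _) v (hp v)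
  have hadd : sf.add = sf.curr := by
    unfold AddInv at hAf
    rw [hvisited] at hAf
    exact add_right_cancel hAf
  obtain ⟨o, W, _, hc⟩ := hCf
  refine ⟨o, W, ?_⟩
  unfold Deploy.agentCount
  rw [← hsf, hadd, hc]

lemma agentCount_le_append {vs u t : V} (p : G.Walk vs u) (r : G.Walk u t) :
    Deploy.agentCount wE wV p ≤ Deploy.agentCount wE wV (p.append r) := by
  unfold Deploy.agentCount
  rw [scanWalk_append]
  exact add_le_add_right (add_le_scanWalk wE wV r _) _

lemma exists_covering_walk (hG : G.Connected) (vs : V) :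
    ∃ (t : V) (q : G.Walk vs t), Deploy.IsCovering q := by
  classical
  have key : ∀ l : List V, ∃ q : G.Walk vs vs, ∀ v ∈ l, v ∈ q.support := by
    intro l
    induction l with
    | nil => exact ⟨.nil, by simp⟩
    | cons v l ih =>
      obtain ⟨q, hq⟩ := ih
      obtain ⟨w⟩ := hG.preconnected vs v
      refine ⟨(w.append w.reverse).append q, ?_⟩
      intro x hx
      rw [SimpleGraph.Walk.mem_support_append_iff, SimpleGraph.Walk.mem_support_append_iff]
      rcases List.mem_cons.mp hx with rfl | hx
      · exact Or.inl (Or.inl (SimpleGraph.Walk.end_mem_support w))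
      · exact Or.inr (hq x hx)
  obtain ⟨q, hq⟩ := key Finset.univ.toList
  exact ⟨vs, q, fun v => hq v (by simp)⟩

end DeployAux

/-- for a finite weighted tree `T` rooted at `v_s` with at least
two vertices, there exists a covering walk from `v_s` of minimal agent count
(among all covering walks from `v_s`, with no requirement to return) whose
last vertex is a leaf of `T`. -/
theorem no_return_ends_at_leaf
    {V : Type*} [Fintype V] [DecidableEq V] (T : SimpleGraph V) (hT : T.IsTree)
    (hcard : 1 < Fintype.card V)
    (wE : Sym2 V → NNReal) (wV : V → NNReal) (vs : V) :
    ∃ (t : V) (p : T.Walk vs t),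
      Deploy.IsCovering p ∧
      (∀ (u : V) (q : T.Walk vs u), Deploy.IsCovering q →
        Deploy.agentCount wE wV p ≤ Deploy.agentCount wE wV q) ∧
      Deploy.IsLeaf T vs t := by
  classical
  obtain ⟨t₀, q₀, hq₀⟩ := DeployAux.exists_covering_walk hT.isConnected vs
  set N := ∑ v, wV v with hN
  set S : Set NNReal :=
    {x | ∃ (u : V) (q : T.Walk vs u), Deploy.IsCovering q ∧ Deploy.agentCount wE wV q = x}
    with hSdef
  have hSfin : S.Finite := by
    have hsub : S ⊆ Set.range (fun x : Option (Sym2 V) × Finset V =>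
        N + (Option.elim x.1 N wE - ∑ w ∈ x.2, wV w)) := by
      rintro x ⟨u, q, hq, rfl⟩
      obtain ⟨o, W, hval⟩ := DeployAux.agentCount_covering_mem wE wV q hq
      exact ⟨(o, W), hval.symm⟩
    exact Set.Finite.subset (Set.finite_range _) hsub
  have hSne : S.Nonempty := ⟨_, t₀, q₀, hq₀, rfl⟩
  obtain ⟨m, hmS, hmin⟩ : ∃ m ∈ S, ∀ x ∈ S, m ≤ x := by
    refine ⟨hSfin.toFinset.min' (by simpa using hSne), ?_, ?_⟩
    · have := hSfin.toFinset.min'_mem (by simpa using hSne)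
      simpa using this
    · intro x hx
      exact hSfin.toFinset.min'_le x (by simpa using hx)
  obtain ⟨u₁, q₁, hq₁cov, hq₁⟩ := hmS
  have hEx : ∃ n, ∃ (u : V) (q : T.Walk vs u), Deploy.IsCovering q ∧
      Deploy.agentCount wE wV q ≤ m ∧ q.length = n :=
    ⟨q₁.length, u₁, q₁, hq₁cov, le_of_eq hq₁, rfl⟩
  obtain ⟨t, q, hcov, hlem, hlen⟩ := Nat.find_spec hEx
  refine ⟨t, q, hcov, fun u r hr => hlem.trans (hmin _ ⟨u, r, hr, rfl⟩), ?_⟩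
  -- `q` is not nil
  have hqnil : ¬ q.Nil := by
    intro h
    have hsupp := SimpleGraph.Walk.nil_iff_support_eq.mp h
    have hall : ∀ v : V, v = vs := by
      intro v
      have := hcov v
      rw [hsupp] at this
      simpa using this
    have : Fintype.card V ≤ 1 :=
      Fintype.card_le_one_iff.mpr fun a b => (hall a).trans (hall b).symm
    omega
  have hrnil : ¬ q.reverse.Nil := by
    rw [SimpleGraph.Walk.nil_iff_length_eq, SimpleGraph.Walk.length_reverse]
    rw [SimpleGraph.Walk.nil_iff_length_eq] at hqnil
    exact hqnil
  obtain ⟨u, hadj, r, hqr⟩ := SimpleGraph.Walk.not_nil_iff.mp hrnil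
  -- hadj : T.Adj t u, r : T.Walk u vs
  have hq' : q = r.reverse.append (SimpleGraph.Walk.cons hadj.symm .nil) := by
    have := congrArg SimpleGraph.Walk.reverse hqr
    rwa [SimpleGraph.Walk.reverse_reverse, SimpleGraph.Walk.reverse_cons] at this
  set p₁ := r.reverse with hp₁
  have hsupp : ∀ v : V, v ∈ p₁.support ∨ v = u ∨ v = t := by
    intro v
    have := hcov v
    rw [hq', SimpleGraph.Walk.mem_support_append_iff] at this
    rcases this with h | h
    · exact Or.inl h
    · simp [SimpleGraph.Walk.support_cons] at h
      tauto
  -- `t` does not appear before the end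
  have htp : t ∉ p₁.support := by
    intro ht
    have hcov' : Deploy.IsCovering p₁ := by
      intro v
      rcases hsupp v with h | rfl | rfl
      · exact h
      · exact SimpleGraph.Walk.end_mem_support _
      · exact ht
    have hle : Deploy.agentCount wE wV p₁ ≤ m := by
      calc Deploy.agentCount wE wV p₁ ≤ Deploy.agentCount wE wV q := by
            rw [hq']
            exact DeployAux.agentCount_le_append wE wV _ _
        _ ≤ m := hlem
    have hlt : p₁.length < q.length := by
      rw [hq']
      rw [SimpleGraph.Walk.length_append]
      simp
    rw [hlen] at hlt
    exact Nat.find_min hEx hlt ⟨u, p₁, hcov', hle, rfl⟩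
  have htvs : t ≠ vs := fun h => htp (h ▸ SimpleGraph.Walk.start_mem_support p₁)
  have hsupp' : ∀ v : V, v ≠ t → v ∈ p₁.support := by
    intro v hv
    rcases hsupp v with h | rfl | rfl
    · exact h
    · exact SimpleGraph.Walk.end_mem_support _
    · exact absurd rfl hv
  have hne : T.neighborSet t = {u} := by
    ext a
    simp only [SimpleGraph.mem_neighborSet, Set.mem_singleton_iff]
    constructor
    · intro ha
      by_contra hau
      have hat : a ≠ t := ha.ne'
      have haw : a ∈ p₁.support := hsupp' a hat
      set w2 : T.Walk a u := (p₁.takeUntil a haw).reverse.append p₁ with hw2def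
      have hw2 : t ∉ w2.support := by
        intro ht
        rw [hw2def, SimpleGraph.Walk.mem_support_append_iff] at ht
        rcases ht with h | h
        · rw [SimpleGraph.Walk.support_reverse, List.mem_reverse] at h
          exact htp (SimpleGraph.Walk.support_takeUntil_subset _ _ h)
        · exact htp h
      have htu : t ≠ u := hadj.ne
      have hcanon : (SimpleGraph.Walk.cons ha.symm
          (SimpleGraph.Walk.cons hadj .nil) : T.Walk a u).IsPath := by
        simp [SimpleGraph.Walk.isPath_def, hat, hau, htu]
      have huniq := SimpleGraph.isAcyclic_iff_path_unique.mp hT.IsAcyclic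
        w2.toPath ⟨_, hcanon⟩
      have hmem : t ∈ (w2.toPath : T.Walk a u).support := by
        rw [huniq]
        simp
      exact hw2 (SimpleGraph.Walk.support_toPath_subset _ hmem)
    · rintro rfl
      exact hadj
  constructor
  · rw [hne, Nat.card_coe_set_eq]
    exact Set.ncard_singleton u
  · exact htvs
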